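/- Assume ζ₀ ∈ ℝ₊ and D(√ζ₀) > 0. Then for every input b ∈ ℝ, the function h has exactly one real root; equivalently, the S-NOD system has a unique fixed point. -/

import Mathlib

set_option maxHeartbeats 1000000 in
/-- If `ζ₀ ∈ ℝ₊` (i.e. `(c₂ + 4·a·kₛ)² − 15·c₁·c₃ ≥ 0` and `ζ₀ > 0`)
and `D(√ζ₀) > 0`, then for every input `b ∈ ℝ` the function
`h(z) = −d·z + tanh(a·z·(−kₛ·z⁴ + k·z² + μ₀) + b)` has exactly one real root;
equivalently, the S-NOD system has a unique fixed point. -/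
theorem snod_unique_fixed_point
    (a d k ks ε μ0 : ℝ)
    (ha : 0 < a) (hd : 0 < d) (hk : 0 < k) (hks : 0 < ks) (hε : 0 < ε) (hμ0 : 0 < μ0)
    (c3 c2 c1 c0 : ℝ)
    (hc3 : c3 = a * d ^ 2 * ks) (hc2 : c2 = 3 * a * d ^ 2 * k + a * ks)
    (hc1 : c1 = 3 * a * k - a * d ^ 2 * μ0) (hc0 : c0 = a * μ0 - d)
    (D : ℝ → ℝ)
    (hD : D = fun z => -5 * c3 * z ^ 6 + (c2 + 4 * a * ks) * z ^ 4 - c1 * z ^ 2 - c0)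
    (ζ0 : ℝ)
    (hζ0 : ζ0 = ((c2 + 4 * a * ks) -
      Real.sqrt ((c2 + 4 * a * ks) ^ 2 - 15 * c1 * c3)) / (15 * c3))
    (hdisc : (c2 + 4 * a * ks) ^ 2 - 15 * c1 * c3 ≥ 0)
    (hζ0pos : 0 < ζ0)
    (hDζ0 : 0 < D (Real.sqrt ζ0)) :
    ∀ b : ℝ, ∃! z : ℝ,
      -d * z + Real.tanh (a * z * (-ks * z ^ 4 + k * z ^ 2 + μ0) + b) = 0 := by
  intro b
  have hc3pos : 0 < c3 := by rw [hc3]; positivity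
  set B : ℝ := c2 + 4 * a * ks with hB
  set T : ℝ := 1 / d ^ 2 with hT
  set s : ℝ := Real.sqrt (B ^ 2 - 15 * c1 * c3) with hs
  have hs0 : 0 ≤ s := Real.sqrt_nonneg _
  have hs2 : s ^ 2 = B ^ 2 - 15 * c1 * c3 := Real.sq_sqrt hdisc
  have hζ : 15 * c3 * ζ0 = B - s := by
    rw [hζ0]; field_simp
  have hcrit : c1 = 2 * B * ζ0 - 15 * c3 * ζ0 ^ 2 := by
    have h15 : (15 : ℝ) * c3 ≠ 0 := by positivity
    have key : 15 * c3 * c1 = 15 * c3 * (2 * B * ζ0 - 15 * c3 * ζ0 ^ 2) := by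
      linear_combination (15 * c3 * ζ0 - B - s) * hζ + hs2
    exact mul_left_cancel₀ h15 key
  have hBle : 15 * c3 * ζ0 ≤ B := by rw [hζ]; linarith
  have hsq : Real.sqrt ζ0 ^ 2 = ζ0 := Real.sq_sqrt hζ0pos.le
  have hpζ0 : 0 < -5 * c3 * ζ0 ^ 3 + B * ζ0 ^ 2 - c1 * ζ0 - c0 := by
    have h6 : Real.sqrt ζ0 ^ 6 = ζ0 ^ 3 := by
      rw [show Real.sqrt ζ0 ^ 6 = (Real.sqrt ζ0 ^ 2) ^ 3 by ring, hsq]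
    have h4 : Real.sqrt ζ0 ^ 4 = ζ0 ^ 2 := by
      rw [show Real.sqrt ζ0 ^ 4 = (Real.sqrt ζ0 ^ 2) ^ 2 by ring, hsq]
    have h := hDζ0
    rw [hD] at h
    simp only at h
    rw [h6, h4, hsq] at h
    exact h
  have hpT : -5 * c3 * T ^ 3 + B * T ^ 2 - c1 * T - c0 = d := by
    rw [hT, hB, hc3, hc2, hc1, hc0]
    field_simp
    ring
  have key : ∀ t : ℝ, 0 ≤ t → t ≤ T → 0 < -5 * c3 * t ^ 3 + B * t ^ 2 - c1 * t - c0 := by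
    intro t ht0 htT
    rcases le_or_gt (5 * c3 * (t + 2 * ζ0)) B with hcase | hcase
    · have e1 : -5 * c3 * t ^ 3 + B * t ^ 2 - c1 * t - c0 =
          (-5 * c3 * ζ0 ^ 3 + B * ζ0 ^ 2 - c1 * ζ0 - c0) +
          (t - ζ0) ^ 2 * (B - 5 * c3 * (t + 2 * ζ0)) := by
        linear_combination (ζ0 - t) * hcrit
      rw [e1]
      have h2 : 0 ≤ (t - ζ0) ^ 2 * (B - 5 * c3 * (t + 2 * ζ0)) :=
        mul_nonneg (sq_nonneg _) (by linarith)
      linarith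
    · have htζ : ζ0 < t := by nlinarith
      have hτ : 0 < t + T - 2 * ζ0 := by linarith
      have e1 : -5 * c3 * t ^ 3 + B * t ^ 2 - c1 * t - c0 =
          (-5 * c3 * T ^ 3 + B * T ^ 2 - c1 * T - c0) +
          (T - t) * (5 * c3 * (T - ζ0) ^ 2 + (5 * c3 * (t + 2 * ζ0) - B) * (t + T - 2 * ζ0)) := by
        linear_combination (T - t) * hcrit
      rw [e1, hpT]
      have h2 : 0 ≤ (T - t) * (5 * c3 * (T - ζ0) ^ 2 + (5 * c3 * (t + 2 * ζ0) - B) * (t + T - 2 * ζ0)) := by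
        apply mul_nonneg (by linarith)
        have ha1 : 0 ≤ 5 * c3 * (T - ζ0) ^ 2 :=
          mul_nonneg (by linarith) (sq_nonneg _)
        have ha2 : 0 ≤ (5 * c3 * (t + 2 * ζ0) - B) * (t + T - 2 * ζ0) :=
          mul_nonneg (by linarith) hτ.le
        linarith
      linarith
  -- the strictly monotone auxiliary function
  set F : ℝ → ℝ := fun z =>
    Real.log (1 + d * z) - Real.log (1 - d * z)
      - 2 * (a * z * (-ks * z ^ 4 + k * z ^ 2 + μ0) + b) with hF
  have hdd : d * (1 / d) = 1 := by field_simp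
  have hbound : ∀ z ∈ Set.Ioo (-(1/d)) (1/d), -1 < d * z ∧ d * z < 1 := by
    intro z hz
    constructor
    · have h := mul_lt_mul_of_pos_left hz.1 hd
      rw [mul_neg, hdd] at h
      linarith
    · have h := mul_lt_mul_of_pos_left hz.2 hd
      rw [hdd] at h
      linarith
  have hderiv : ∀ z ∈ Set.Ioo (-(1/d)) (1/d),
      HasDerivAt F (d / (1 + d * z) + d / (1 - d * z)
        - 2 * (a * μ0 + 3 * a * k * z ^ 2 - 5 * a * ks * z ^ 4)) z := by
    intro z hz
    obtain ⟨hb1, hb2⟩ := hbound z hz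
    have hu : 0 < 1 + d * z := by linarith
    have hv : 0 < 1 - d * z := by linarith
    have h1 : HasDerivAt (fun z : ℝ => 1 + d * z) d z := by
      simpa using ((hasDerivAt_id z).const_mul d).const_add 1
    have h2 : HasDerivAt (fun z : ℝ => 1 - d * z) (-d) z := by
      simpa using ((hasDerivAt_id z).const_mul d).const_sub 1
    have hlog1 := h1.log hu.ne'
    have hlog2 := h2.log hv.ne'
    have hψ : HasDerivAt (fun z : ℝ => 2 * (a * z * (-ks * z ^ 4 + k * z ^ 2 + μ0) + b))
        (2 * (a * μ0 + 3 * a * k * z ^ 2 - 5 * a * ks * z ^ 4)) z := by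
      have h := ((((hasDerivAt_pow 5 z).const_mul (-(2*a*ks))).add
        ((hasDerivAt_pow 3 z).const_mul (2*a*k))).add
        (((hasDerivAt_id z).const_mul (2*a*μ0)).add_const (2*b)))
      have hfg : (fun z : ℝ => 2 * (a * z * (-ks * z ^ 4 + k * z ^ 2 + μ0) + b)) =
          (fun z : ℝ => -(2*a*ks) * z ^ 5 + 2*a*k * z ^ 3 + (2*a*μ0 * z + 2*b)) := by
        funext x; ring
      rw [hfg]
      refine h.congr_deriv ?_
      push_cast
      ring
    have hcomb := (hlog1.sub hlog2).sub hψ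
    rw [hF]
    refine hcomb.congr_deriv ?_
    ring
  have hmono : StrictMonoOn F (Set.Ioo (-(1/d)) (1/d)) := by
    apply strictMonoOn_of_deriv_pos (convex_Ioo _ _)
    · exact fun z hz => ((hderiv z hz).continuousAt.continuousWithinAt)
    · intro z hz
      rw [interior_Ioo] at hz
      rw [(hderiv z hz).deriv]
      obtain ⟨hb1, hb2⟩ := hbound z hz
      have hu : 0 < 1 + d * z := by linarith
      have hv : 0 < 1 - d * z := by linarith
      have hzT : z ^ 2 ≤ T := by
        rw [hT, le_div_iff₀ (by positivity : (0:ℝ) < d ^ 2)]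
        nlinarith [mul_pos hu hv]
      have hp := key (z ^ 2) (sq_nonneg z) hzT
      rw [hB, hc3, hc2, hc1, hc0] at hp
      have hnum : 0 < d * (1 - d * z) + d * (1 + d * z)
          - 2 * (a * μ0 + 3 * a * k * z ^ 2 - 5 * a * ks * z ^ 4) * ((1 + d * z) * (1 - d * z)) := by
        nlinarith [hp]
      have e : d / (1 + d * z) + d / (1 - d * z)
          - 2 * (a * μ0 + 3 * a * k * z ^ 2 - 5 * a * ks * z ^ 4) =
          (d * (1 - d * z) + d * (1 + d * z)
          - 2 * (a * μ0 + 3 * a * k * z ^ 2 - 5 * a * ks * z ^ 4) * ((1 + d * z) * (1 - d * z)))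
          / ((1 + d * z) * (1 - d * z)) := by
        field_simp
      rw [e]
      exact div_pos hnum (mul_pos hu hv)
  -- |tanh| < 1
  have habs : ∀ x : ℝ, |Real.tanh x| < 1 := by
    intro x
    have h1 := Real.cosh_pos x
    have h2 : Real.sinh x < Real.cosh x := by
      nlinarith [Real.exp_pos (-x), Real.cosh_sub_sinh x]
    have h3 : -Real.cosh x < Real.sinh x := by
      nlinarith [Real.exp_pos x, Real.cosh_add_sinh x]
    rw [Real.tanh_eq_sinh_div_cosh, abs_div, abs_of_pos h1, div_lt_one h1, abs_lt]
    exact ⟨h3, h2⟩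
  -- every root lies in the interval and is a root of F
  have root_mem : ∀ z : ℝ,
      -d * z + Real.tanh (a * z * (-ks * z ^ 4 + k * z ^ 2 + μ0) + b) = 0 →
      z ∈ Set.Ioo (-(1/d)) (1/d) ∧ F z = 0 := by
    intro z hz
    set ψ := a * z * (-ks * z ^ 4 + k * z ^ 2 + μ0) + b with hψdef
    have htanh : Real.tanh ψ = d * z := by linarith
    have h1 : |d * z| < 1 := htanh ▸ habs ψ
    rw [abs_lt] at h1
    have hmem : z ∈ Set.Ioo (-(1/d)) (1/d) := by
      constructor
      · rw [show -(1/d) = (-1)/d by ring, div_lt_iff₀ hd]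
        linarith [h1.1, mul_comm z d]
      · rw [lt_div_iff₀ hd]
        linarith [h1.2, mul_comm z d]
    refine ⟨hmem, ?_⟩
    have hu : 0 < 1 + d * z := by linarith [h1.1]
    have hv : 0 < 1 - d * z := by linarith [h1.2]
    set E := Real.exp ψ with hE
    have hEpos : 0 < E := Real.exp_pos ψ
    have hEne : E ≠ 0 := hEpos.ne'
    have hch : 0 < E + E⁻¹ := by positivity
    have hchne : E + E⁻¹ ≠ 0 := hch.ne'
    have hinv : E * E⁻¹ = 1 := mul_inv_cancel₀ hEne
    have e1 : (E - E⁻¹) / 2 / ((E + E⁻¹) / 2) = d * z := by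
      rw [← Real.exp_neg, ← Real.sinh_eq, ← Real.cosh_eq, ← Real.tanh_eq_sinh_div_cosh]
      exact htanh
    have e2 : E ^ 2 * (1 - d * z) = 1 + d * z := by
      field_simp at e1
      linear_combination e1
    have e4 : E ^ 2 = (1 + d * z) / (1 - d * z) := by
      rw [eq_div_iff hv.ne']
      exact e2
    have e5 : 2 * ψ = Real.log (1 + d * z) - Real.log (1 - d * z) := by
      have hlogE : Real.log (E ^ 2) = 2 * ψ := by
        rw [Real.log_pow, hE, Real.log_exp]; push_cast; ring
      rw [← hlogE, e4, Real.log_div hu.ne' hv.ne']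
    rw [hF]
    simp only
    rw [← hψdef]
    linarith
  -- existence by IVT
  have hcont : Continuous (fun z : ℝ =>
      -d * z + Real.tanh (a * z * (-ks * z ^ 4 + k * z ^ 2 + μ0) + b)) := by
    have htanh : Continuous Real.tanh := by
      have hfun : Real.tanh = fun x => Real.sinh x / Real.cosh x := by
        funext x; exact Real.tanh_eq_sinh_div_cosh x
      rw [hfun]
      exact Real.continuous_sinh.div Real.continuous_cosh fun x => (Real.cosh_pos x).ne'
    fun_prop
  have hlo : -d * (1/d) + Real.tanh (a * (1/d) * (-ks * (1/d) ^ 4 + k * (1/d) ^ 2 + μ0) + b) < 0 := by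
    have h := abs_lt.mp (habs (a * (1/d) * (-ks * (1/d) ^ 4 + k * (1/d) ^ 2 + μ0) + b))
    linarith [h.2]
  have hhi : 0 < -d * (-(1/d)) + Real.tanh (a * (-(1/d)) * (-ks * (-(1/d)) ^ 4 + k * (-(1/d)) ^ 2 + μ0) + b) := by
    have h := abs_lt.mp (habs (a * (-(1/d)) * (-ks * (-(1/d)) ^ 4 + k * (-(1/d)) ^ 2 + μ0) + b))
    linarith [h.1, hdd]
  have hle : -(1/d) ≤ 1/d := by
    have : 0 < 1/d := by positivity
    linarith
  obtain ⟨x, hxmem, hx0⟩ := intermediate_value_Icc' hle hcont.continuousOn ⟨hlo.le, hhi.le⟩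
  refine ⟨x, hx0, ?_⟩
  intro y hy
  obtain ⟨hyI, hyF⟩ := root_mem y hy
  obtain ⟨hxI, hxF⟩ := root_mem x hx0
  exact hmono.injOn hyI hxI (hyF.trans hxF.symm)
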